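/- arXiv:2203.02990 — 3 statements merged into one kernel-verified Lean document; each statement's English description precedes it below -/
import Mathlib

section
/- Let N ≥ 1, φ ≥ 2 be integers and set M = (φ+1)N (one fewer collocation node than required). Then the aliasing matrix is nonzero: taking i = N and n = φN, one has N + φN = M, and ∑_{j=0}^{M-1} cos(N t_j)·cos(φN t_j) = M/2 ≠ 0, where t_j = 2πj/M. -/
open Real Finset

lemma aux_sum_cos_eq_zero (M k : ℕ) (hk : 0 < k) (hkM : k < M) :
    ∑ j ∈ Finset.range M, Real.cos ((k : ℝ) * (2 * Real.pi * j / M)) = 0 := by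
  have hM : 0 < M := lt_trans hk hkM
  set ζ : ℂ := Complex.exp ((2 * Real.pi * k / M : ℝ) * Complex.I) with hζdef
  have hpow : ∀ j : ℕ, ζ ^ j = Complex.exp ((2 * Real.pi * k * j / M : ℝ) * Complex.I) := by
    intro j
    rw [hζdef, ← Complex.exp_nat_mul]
    congr 1
    push_cast
    ring
  have hre : ∀ j : ℕ, Real.cos ((k : ℝ) * (2 * Real.pi * j / M)) = (ζ ^ j).re := by
    intro j
    rw [hpow j, Complex.exp_ofReal_mul_I_re]
    ring_nf
  have hζM : ζ ^ M = 1 := by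
    rw [hpow M]
    have : (2 * Real.pi * k * M / M : ℝ) = (k : ℤ) * (2 * Real.pi) := by
      have hM0 : (M:ℝ) ≠ 0 := by exact_mod_cast hM.ne'
      rw [mul_div_assoc, div_self hM0]
      push_cast
      ring
    rw [this]
    rw [show ((((k:ℤ) * (2 * Real.pi) : ℝ)) : ℂ) * Complex.I = (k:ℤ) * (2 * Real.pi * Complex.I) by push_cast; ring]
    exact Complex.exp_int_mul_two_pi_mul_I (k : ℤ)
  have hζ1 : ζ ≠ 1 := by
    rw [hζdef, Ne, Complex.exp_eq_one_iff]
    rintro ⟨n, hn⟩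
    rw [show ((n : ℂ) * (2 * ↑Real.pi * Complex.I)) = ((n * (2 * Real.pi) : ℝ) : ℂ) * Complex.I by push_cast; ring] at hn
    have := Complex.ofReal_inj.mp (mul_right_cancel₀ Complex.I_ne_zero hn)
    have hπ := Real.pi_pos
    have hM' : (0:ℝ) < M := by exact_mod_cast hM
    have hkM' : (k:ℝ) < M := by exact_mod_cast hkM
    have hk' : (0:ℝ) < k := by exact_mod_cast hk
    have hfrac : (2 * Real.pi * k / M : ℝ) = n * (2 * Real.pi) := this
    have h1 : (n : ℝ) = k / M := by
      field_simp at hfrac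
      field_simp
      nlinarith [hfrac]
    have h0 : (0:ℝ) < (n:ℝ) := by rw [h1]; positivity
    have h2 : (n:ℝ) < 1 := by rw [h1]; rw [div_lt_one hM']; exact hkM'
    have : (0:ℤ) < n := by exact_mod_cast h0
    have : (n:ℤ) < 1 := by exact_mod_cast h2
    omega
  have hsum : ∑ j ∈ Finset.range M, ζ ^ j = 0 := by
    rw [geom_sum_eq hζ1, hζM]
    simp
  calc ∑ j ∈ Finset.range M, Real.cos ((k : ℝ) * (2 * Real.pi * j / M))
      = ∑ j ∈ Finset.range M, (ζ ^ j).re := by exact Finset.sum_congr rfl fun j _ => hre j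
    _ = (∑ j ∈ Finset.range M, ζ ^ j).re := by rw [Complex.re_sum]
    _ = 0 := by rw [hsum]; simp

theorem aliasing_matrix_nonzero_at_critical_M (N φ : ℕ) (hN : 1 ≤ N) (hφ : 2 ≤ φ) :
    let M := (φ + 1) * N
    let t : ℕ → ℝ := fun j => 2 * Real.pi * j / M
    N + φ * N = M ∧
    (∑ j ∈ Finset.range M, Real.cos (N * t j) * Real.cos ((φ * N : ℕ) * t j) = (M : ℝ) / 2) ∧
    ((M : ℝ) / 2 ≠ 0) := by
  intro M t
  have hM : 0 < M := by positivity
  have hMN : N + φ * N = M := by simp only [M]; ring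
  refine ⟨hMN, ?_, ?_⟩
  · have key : ∀ j ∈ Finset.range M,
        Real.cos (N * t j) * Real.cos ((φ * N : ℕ) * t j)
          = (1 + Real.cos (((φ - 1) * N : ℕ) * (2 * Real.pi * j / M))) / 2 := by
      intro j _
      have hcc : Real.cos (N * t j) * Real.cos ((φ * N : ℕ) * t j)
          = (Real.cos ((N : ℝ) * t j + (φ * N : ℕ) * t j) + Real.cos ((N : ℝ) * t j - (φ * N : ℕ) * t j)) / 2 := by
        rw [Real.cos_add, Real.cos_sub]; ring
      rw [hcc]
      have h1 : (N : ℝ) * t j + (φ * N : ℕ) * t j = j * (2 * Real.pi) := by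
        simp only [t]
        have hc : ((N : ℝ) + (φ * N : ℕ)) = (M : ℝ) := by exact_mod_cast congrArg (Nat.cast : ℕ → ℝ) hMN
        have hM' : (M : ℝ) ≠ 0 := by positivity
        calc (N : ℝ) * (2 * Real.pi * j / M) + ((φ * N : ℕ) : ℝ) * (2 * Real.pi * j / M)
            = ((N : ℝ) + ((φ * N : ℕ) : ℝ)) * (2 * Real.pi * j / M) := by ring
          _ = (M : ℝ) * (2 * Real.pi * j / M) := by rw [hc]
          _ = j * (2 * Real.pi) := by field_simp
      have h2 : (N : ℝ) * t j - (φ * N : ℕ) * t j = -(((φ - 1) * N : ℕ) * (2 * Real.pi * j / M)) := by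
        simp only [t]
        have : ((φ - 1 : ℕ) : ℝ) = (φ : ℝ) - 1 := by
          have : 1 ≤ φ := le_trans one_le_two hφ
          push_cast [this]; ring
        push_cast [this]
        ring
      rw [h1, h2, Real.cos_neg]
      rw [Real.cos_nat_mul_two_pi j]
    rw [Finset.sum_congr rfl key]
    have hk : 0 < (φ - 1) * N := by
      have : 1 ≤ φ - 1 := by omega
      exact Nat.mul_pos this hN
    have hkM : (φ - 1) * N < M := by
      simp only [M]
      have : φ - 1 < φ + 1 := by omega
      exact (Nat.mul_lt_mul_right hN).mpr this
    have := aux_sum_cos_eq_zero M ((φ - 1) * N) hk hkM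
    simp only [add_div]
    rw [Finset.sum_add_distrib, ← Finset.sum_div, ← Finset.sum_div, this]
    simp
  · have : (0:ℝ) < M := by exact_mod_cast hM
    positivity
end

section
/- Conversely, if M, N, φ are positive integers with φ ≥ 2 and M ≤ (φ+1)N, then there exist an integer n with N < n ≤ φN and a nonzero integer m such that |n − mM| ≤ N. -/
theorem dealiasing_bound_sharp (M N φ : ℕ) (hN : 0 < N) (hM : 0 < M) (hφ : 2 ≤ φ)
    (hMN : M ≤ (φ + 1) * N) :
    ∃ n m : ℤ, (N : ℤ) < n ∧ n ≤ (φ : ℤ) * N ∧ m ≠ 0 ∧ |n - m * M| ≤ (N : ℤ) := by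
  rcases le_or_gt M (2 * N) with h | h
  · refine ⟨N + 1, 1, by omega, ?_, one_ne_zero, ?_⟩
    · have : (2 : ℤ) * N ≤ (φ : ℤ) * N := by
        have : (2 : ℤ) ≤ (φ : ℤ) := by exact_mod_cast hφ
        nlinarith
      omega
    · rw [abs_le]; push_cast; omega
  · refine ⟨(M : ℤ) - N, 1, by push_cast; omega, ?_, one_ne_zero, ?_⟩
    · have h2 : (M : ℤ) ≤ ((φ : ℤ) + 1) * N := by exact_mod_cast hMN
      nlinarith
    · rw [abs_le]; push_cast; omega
end

section
/- Let N ≥ 1, φ ≥ 2, M > (φ+1)N, with nodes t_j = 2π(j−1)/M, let E be the M×(2N+1) collocation matrix of harmonics 0..N, E⁺ its explicit left inverse as defined above, and E₁ the M×(2(φ−1)N) matrix of harmonics N+1..φN at the same nodes. Suppose f(t) is a trigonometric polynomial of degree at most φN with coefficient vector (ĥ, ĥ′), where ĥ collects coefficients of harmonics 0..N and ĥ′ those of harmonics N+1..φN, and let f̃ = (f(t₁),…,f(t_M)). Then f̃ = E ĥ + E₁ ĥ′ and E⁺ f̃ = ĥ. -/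
open Real Finset Matrix

/-- The `i`-th trigonometric basis function of the retained harmonics `0..N`:
`1`, `cos t`, `sin t`, `cos 2t`, `sin 2t`, … -/
noncomputable def trigBasis (i : ℕ) (t : ℝ) : ℝ :=
  if i = 0 then 1
  else if i % 2 = 1 then Real.cos (((i + 1) / 2 : ℕ) * t)
  else Real.sin ((i / 2 : ℕ) * t)

/-- The `c`-th basis function of the higher harmonics `N+1..φN`:
`cos ((N+1)t), sin ((N+1)t), …, cos (φN t), sin (φN t)`. -/
noncomputable def trigBasisHigh (N c : ℕ) (t : ℝ) : ℝ :=
  if c % 2 = 0 then Real.cos (((N + 1 + c / 2 : ℕ)) * t)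
  else Real.sin (((N + 1 + c / 2 : ℕ)) * t)

private lemma sum_exp_zero (M : ℕ) (k : ℤ) (hk : k ≠ 0) (hkM : k.natAbs < M) :
    ∑ j : Fin M, Complex.exp ((((k : ℝ) * (2 * Real.pi * (j : ℕ) / M) : ℝ) : ℂ) * Complex.I)
      = 0 := by
  have hM : 0 < M := by omega
  have hMR : (M : ℝ) ≠ 0 := Nat.cast_ne_zero.mpr (by omega)
  set z : ℂ := Complex.exp ((((k : ℝ) * (2 * Real.pi / M) : ℝ) : ℂ) * Complex.I) with hz
  have hterm : ∀ j : Fin M,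
      Complex.exp ((((k : ℝ) * (2 * Real.pi * (j : ℕ) / M) : ℝ) : ℂ) * Complex.I)
        = z ^ (j : ℕ) := by
    intro j
    rw [hz, ← Complex.exp_nat_mul]
    congr 1
    push_cast
    ring
  rw [Finset.sum_congr rfl fun j _ => hterm j]
  rw [Fin.sum_univ_eq_sum_range (fun n => z ^ n)]
  have hz1 : z ≠ 1 := by
    rw [hz]
    intro hcon
    rw [Complex.exp_eq_one_iff] at hcon
    obtain ⟨n, hn⟩ := hcon
    have hI : (Complex.I : ℂ) ≠ 0 := Complex.I_ne_zero
    have h1 : ((((k : ℝ) * (2 * Real.pi / M) : ℝ)) : ℂ) = ((n : ℝ) * (2 * Real.pi) : ℝ) := by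
      apply mul_right_cancel₀ hI
      rw [hn]
      push_cast
      ring
    have h2 : (k : ℝ) * (2 * Real.pi / M) = (n : ℝ) * (2 * Real.pi) := by
      exact_mod_cast h1
    have hπ : (2 * Real.pi) ≠ 0 := by positivity
    have h3 : (k : ℝ) = (n : ℝ) * (M : ℝ) := by
      field_simp at h2
      nlinarith [Real.pi_pos]
    have h4 : k = n * M := by exact_mod_cast h3
    have hn0 : n ≠ 0 := by
      intro h; rw [h] at h4; simp at h4; exact hk h4
    have h5 : k.natAbs = n.natAbs * M := by rw [h4, Int.natAbs_mul]; simp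
    have h6 : M ≤ n.natAbs * M := Nat.le_mul_of_pos_left M (by omega)
    omega
  have hzM : z ^ M = 1 := by
    rw [hz, ← Complex.exp_nat_mul]
    have harg : (M : ℂ) * (((((k : ℝ) * (2 * Real.pi / M) : ℝ)) : ℂ) * Complex.I)
        = (k : ℂ) * (2 * Real.pi * Complex.I) := by
      have hMC : (M : ℂ) ≠ 0 := Nat.cast_ne_zero.mpr (by omega)
      push_cast
      field_simp
    rw [harg]
    exact_mod_cast Complex.exp_int_mul_two_pi_mul_I k
  rw [geom_sum_eq hz1, hzM]
  simp

private lemma sum_cos_int (M : ℕ) (hM : 0 < M) (k : ℤ) (hkM : k.natAbs < M) :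
    ∑ j : Fin M, Real.cos ((k : ℝ) * (2 * Real.pi * (j : ℕ) / M))
      = if k = 0 then (M : ℝ) else 0 := by
  by_cases hk : k = 0
  · simp [hk]
  · rw [if_neg hk]
    have h0 := sum_exp_zero M k hk hkM
    have hre : ∀ j : Fin M, Real.cos ((k : ℝ) * (2 * Real.pi * (j : ℕ) / M))
        = (Complex.exp ((((k : ℝ) * (2 * Real.pi * (j : ℕ) / M) : ℝ) : ℂ) * Complex.I)).re :=
      fun j => (Complex.exp_ofReal_mul_I_re _).symm
    rw [Finset.sum_congr rfl fun j _ => hre j, ← Complex.re_sum, h0, Complex.zero_re]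

private lemma sum_sin_int (M : ℕ) (hM : 0 < M) (k : ℤ) (hkM : k.natAbs < M) :
    ∑ j : Fin M, Real.sin ((k : ℝ) * (2 * Real.pi * (j : ℕ) / M)) = 0 := by
  by_cases hk : k = 0
  · simp [hk]
  · have h0 := sum_exp_zero M k hk hkM
    have him : ∀ j : Fin M, Real.sin ((k : ℝ) * (2 * Real.pi * (j : ℕ) / M))
        = (Complex.exp ((((k : ℝ) * (2 * Real.pi * (j : ℕ) / M) : ℝ) : ℂ) * Complex.I)).im :=
      fun j => (Complex.exp_ofReal_mul_I_im _).symm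
    rw [Finset.sum_congr rfl fun j _ => him j, ← Complex.im_sum, h0, Complex.zero_im]

private lemma sum_cos_nat (M a : ℕ) (ha : a < M) :
    ∑ j : Fin M, Real.cos ((a : ℝ) * (2 * Real.pi * (j : ℕ) / M))
      = if a = 0 then (M : ℝ) else 0 := by
  have := sum_cos_int M (by omega) (a : ℤ) (by omega)
  simpa using this

private lemma sum_sin_nat (M a : ℕ) (ha : a < M) :
    ∑ j : Fin M, Real.sin ((a : ℝ) * (2 * Real.pi * (j : ℕ) / M)) = 0 := by
  have := sum_sin_int M (by omega) (a : ℤ) (by omega)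
  simpa using this

private lemma S_cc (M a b : ℕ) (hab : a + b < M) :
    ∑ j : Fin M, Real.cos ((a : ℝ) * (2 * Real.pi * (j : ℕ) / M))
        * Real.cos ((b : ℝ) * (2 * Real.pi * (j : ℕ) / M))
      = if a = b then (if a = 0 then (M : ℝ) else (M : ℝ) / 2) else 0 := by
  have key : ∀ j : Fin M, Real.cos ((a : ℝ) * (2 * Real.pi * (j : ℕ) / M))
        * Real.cos ((b : ℝ) * (2 * Real.pi * (j : ℕ) / M))
      = (Real.cos ((((a : ℤ) - b : ℤ) : ℝ) * (2 * Real.pi * (j : ℕ) / M))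
        + Real.cos ((((a : ℤ) + b : ℤ) : ℝ) * (2 * Real.pi * (j : ℕ) / M))) / 2 := by
    intro j
    have h := Real.two_mul_cos_mul_cos ((a : ℝ) * (2 * Real.pi * (j : ℕ) / M))
      ((b : ℝ) * (2 * Real.pi * (j : ℕ) / M))
    have h1 : ((((a : ℤ) - b : ℤ) : ℝ)) * (2 * Real.pi * (j : ℕ) / M)
        = (a : ℝ) * (2 * Real.pi * (j : ℕ) / M) - (b : ℝ) * (2 * Real.pi * (j : ℕ) / M) := by
      push_cast; ring
    have h2 : ((((a : ℤ) + b : ℤ) : ℝ)) * (2 * Real.pi * (j : ℕ) / M)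
        = (a : ℝ) * (2 * Real.pi * (j : ℕ) / M) + (b : ℝ) * (2 * Real.pi * (j : ℕ) / M) := by
      push_cast; ring
    rw [h1, h2]
    linarith
  rw [Finset.sum_congr rfl fun j _ => key j, ← Finset.sum_div, Finset.sum_add_distrib,
    sum_cos_int M (by omega) _ (by omega), sum_cos_int M (by omega) _ (by omega)]
  split_ifs
  all_goals try (exfalso; omega)
  all_goals ring

private lemma S_ss (M a b : ℕ) (hab : a + b < M) :
    ∑ j : Fin M, Real.sin ((a : ℝ) * (2 * Real.pi * (j : ℕ) / M))
        * Real.sin ((b : ℝ) * (2 * Real.pi * (j : ℕ) / M))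
      = if a = b then (if a = 0 then 0 else (M : ℝ) / 2) else 0 := by
  have key : ∀ j : Fin M, Real.sin ((a : ℝ) * (2 * Real.pi * (j : ℕ) / M))
        * Real.sin ((b : ℝ) * (2 * Real.pi * (j : ℕ) / M))
      = (Real.cos ((((a : ℤ) - b : ℤ) : ℝ) * (2 * Real.pi * (j : ℕ) / M))
        - Real.cos ((((a : ℤ) + b : ℤ) : ℝ) * (2 * Real.pi * (j : ℕ) / M))) / 2 := by
    intro j
    have h := Real.two_mul_sin_mul_sin ((a : ℝ) * (2 * Real.pi * (j : ℕ) / M))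
      ((b : ℝ) * (2 * Real.pi * (j : ℕ) / M))
    have h1 : ((((a : ℤ) - b : ℤ) : ℝ)) * (2 * Real.pi * (j : ℕ) / M)
        = (a : ℝ) * (2 * Real.pi * (j : ℕ) / M) - (b : ℝ) * (2 * Real.pi * (j : ℕ) / M) := by
      push_cast; ring
    have h2 : ((((a : ℤ) + b : ℤ) : ℝ)) * (2 * Real.pi * (j : ℕ) / M)
        = (a : ℝ) * (2 * Real.pi * (j : ℕ) / M) + (b : ℝ) * (2 * Real.pi * (j : ℕ) / M) := by
      push_cast; ring
    rw [h1, h2]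
    linarith
  rw [Finset.sum_congr rfl fun j _ => key j, ← Finset.sum_div, Finset.sum_sub_distrib,
    sum_cos_int M (by omega) _ (by omega), sum_cos_int M (by omega) _ (by omega)]
  split_ifs
  all_goals try (exfalso; omega)
  all_goals ring

private lemma S_sc (M a b : ℕ) (hab : a + b < M) :
    ∑ j : Fin M, Real.sin ((a : ℝ) * (2 * Real.pi * (j : ℕ) / M))
        * Real.cos ((b : ℝ) * (2 * Real.pi * (j : ℕ) / M)) = 0 := by
  have key : ∀ j : Fin M, Real.sin ((a : ℝ) * (2 * Real.pi * (j : ℕ) / M))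
        * Real.cos ((b : ℝ) * (2 * Real.pi * (j : ℕ) / M))
      = (Real.sin ((((a : ℤ) - b : ℤ) : ℝ) * (2 * Real.pi * (j : ℕ) / M))
        + Real.sin ((((a : ℤ) + b : ℤ) : ℝ) * (2 * Real.pi * (j : ℕ) / M))) / 2 := by
    intro j
    have h := Real.two_mul_sin_mul_cos ((a : ℝ) * (2 * Real.pi * (j : ℕ) / M))
      ((b : ℝ) * (2 * Real.pi * (j : ℕ) / M))
    have h1 : ((((a : ℤ) - b : ℤ) : ℝ)) * (2 * Real.pi * (j : ℕ) / M)
        = (a : ℝ) * (2 * Real.pi * (j : ℕ) / M) - (b : ℝ) * (2 * Real.pi * (j : ℕ) / M) := by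
      push_cast; ring
    have h2 : ((((a : ℤ) + b : ℤ) : ℝ)) * (2 * Real.pi * (j : ℕ) / M)
        = (a : ℝ) * (2 * Real.pi * (j : ℕ) / M) + (b : ℝ) * (2 * Real.pi * (j : ℕ) / M) := by
      push_cast; ring
    rw [h1, h2]
    linarith
  rw [Finset.sum_congr rfl fun j _ => key j, ← Finset.sum_div, Finset.sum_add_distrib,
    sum_sin_int M (by omega) _ (by omega), sum_sin_int M (by omega) _ (by omega)]
  ring

private lemma S_cs (M a b : ℕ) (hab : a + b < M) :
    ∑ j : Fin M, Real.cos ((a : ℝ) * (2 * Real.pi * (j : ℕ) / M))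
        * Real.sin ((b : ℝ) * (2 * Real.pi * (j : ℕ) / M)) = 0 := by
  have := S_sc M b a (by omega)
  calc ∑ j : Fin M, Real.cos ((a : ℝ) * (2 * Real.pi * (j : ℕ) / M))
        * Real.sin ((b : ℝ) * (2 * Real.pi * (j : ℕ) / M))
      = ∑ j : Fin M, Real.sin ((b : ℝ) * (2 * Real.pi * (j : ℕ) / M))
        * Real.cos ((a : ℝ) * (2 * Real.pi * (j : ℕ) / M)) := by
        exact Finset.sum_congr rfl fun j _ => mul_comm _ _
    _ = 0 := this

private lemma claimA (N M : ℕ) (h2 : 2 * N < M) (i i' : Fin (2 * N + 1)) :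
    ∑ j : Fin M, ((2 / (M : ℝ)) *
        (if (i : ℕ) = 0 then (1 : ℝ) / 2 else trigBasis i (2 * Real.pi * (j : ℕ) / M)))
        * trigBasis i' (2 * Real.pi * (j : ℕ) / M)
      = if i = i' then 1 else 0 := by
  have hM : 0 < M := by omega
  have hMR : (M : ℝ) ≠ 0 := Nat.cast_ne_zero.mpr (by omega)
  have hival : (i : ℕ) < 2 * N + 1 := i.isLt
  have hi'val : (i' : ℕ) < 2 * N + 1 := i'.isLt
  have hsplit : (∑ j : Fin M, ((2 / (M : ℝ)) *
        (if (i : ℕ) = 0 then (1 : ℝ) / 2 else trigBasis i (2 * Real.pi * (j : ℕ) / M)))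
        * trigBasis i' (2 * Real.pi * (j : ℕ) / M))
      = (2 / (M : ℝ)) * ∑ j : Fin M,
        (if (i : ℕ) = 0 then (1 : ℝ) / 2 else trigBasis i (2 * Real.pi * (j : ℕ) / M))
        * trigBasis i' (2 * Real.pi * (j : ℕ) / M) := by
    rw [Finset.mul_sum]
    exact Finset.sum_congr rfl fun j _ => mul_assoc _ _ _
  rw [hsplit]
  by_cases hi : (i : ℕ) = 0
  · simp only [if_pos hi]
    by_cases hi' : (i' : ℕ) = 0
    · have hii : i = i' := Fin.ext (by omega)
      simp only [trigBasis, if_pos hi', mul_one, if_pos hii, Finset.sum_const,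
        Finset.card_univ, Fintype.card_fin, nsmul_eq_mul]
      field_simp
    · have hii : ¬ i = i' := by intro hE; rw [Fin.ext_iff] at hE; omega
      rw [if_neg hii]
      simp only [trigBasis, if_neg hi']
      by_cases hp : (i' : ℕ) % 2 = 1
      · simp only [if_pos hp]
        rw [← Finset.mul_sum, sum_cos_nat M (((i' : ℕ) + 1) / 2) (by omega),
          if_neg (by omega)]
        ring
      · simp only [if_neg hp]
        rw [← Finset.mul_sum, sum_sin_nat M ((i' : ℕ) / 2) (by omega)]
        ring
  · simp only [if_neg hi]
    by_cases hp : (i : ℕ) % 2 = 1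
    · by_cases hi' : (i' : ℕ) = 0
      · have hii : ¬ i = i' := by intro hE; rw [Fin.ext_iff] at hE; omega
        rw [if_neg hii]
        simp only [trigBasis, if_neg hi, if_pos hp, if_pos hi', mul_one]
        rw [sum_cos_nat M (((i : ℕ) + 1) / 2) (by omega), if_neg (by omega)]
        ring
      · by_cases hp' : (i' : ℕ) % 2 = 1
        · simp only [trigBasis, if_neg hi, if_pos hp, if_neg hi', if_pos hp']
          rw [S_cc M (((i : ℕ) + 1) / 2) (((i' : ℕ) + 1) / 2) (by omega)]
          by_cases he : i = i'
          · rw [if_pos (by rw [he]), if_neg (by omega), if_pos he]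
            field_simp
          · have hv : ¬ (i : ℕ) = (i' : ℕ) := fun hE => he (Fin.ext hE)
            rw [if_neg (by omega), if_neg he]
            ring
        · have hii : ¬ i = i' := by intro hE; rw [Fin.ext_iff] at hE; omega
          rw [if_neg hii]
          simp only [trigBasis, if_neg hi, if_pos hp, if_neg hi', if_neg hp']
          rw [S_cs M (((i : ℕ) + 1) / 2) ((i' : ℕ) / 2) (by omega)]
          ring
    · by_cases hi' : (i' : ℕ) = 0
      · have hii : ¬ i = i' := by intro hE; rw [Fin.ext_iff] at hE; omega
        rw [if_neg hii]
        simp only [trigBasis, if_neg hi, if_neg hp, if_pos hi', mul_one]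
        rw [sum_sin_nat M ((i : ℕ) / 2) (by omega)]
        ring
      · by_cases hp' : (i' : ℕ) % 2 = 1
        · have hii : ¬ i = i' := by intro hE; rw [Fin.ext_iff] at hE; omega
          rw [if_neg hii]
          simp only [trigBasis, if_neg hi, if_neg hp, if_neg hi', if_pos hp']
          rw [S_sc M ((i : ℕ) / 2) (((i' : ℕ) + 1) / 2) (by omega)]
          ring
        · simp only [trigBasis, if_neg hi, if_neg hp, if_neg hi', if_neg hp']
          rw [S_ss M ((i : ℕ) / 2) ((i' : ℕ) / 2) (by omega)]
          by_cases he : i = i'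
          · rw [if_pos (by rw [he]), if_neg (by omega), if_pos he]
            field_simp
          · have hv : ¬ (i : ℕ) = (i' : ℕ) := fun hE => he (Fin.ext hE)
            rw [if_neg (by omega), if_neg he]
            ring

private lemma claimB (N φ M : ℕ) (hN : 1 ≤ N) (hφ : 2 ≤ φ) (hM : (φ + 1) * N < M)
    (i : Fin (2 * N + 1)) (c : Fin (2 * (φ - 1) * N)) :
    ∑ j : Fin M, ((2 / (M : ℝ)) *
        (if (i : ℕ) = 0 then (1 : ℝ) / 2 else trigBasis i (2 * Real.pi * (j : ℕ) / M)))
        * trigBasisHigh N c (2 * Real.pi * (j : ℕ) / M) = 0 := by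
  have hival : (i : ℕ) < 2 * N + 1 := i.isLt
  have hcval : (c : ℕ) < 2 * (φ - 1) * N := c.isLt
  have e1 : (φ + 1) * N = φ * N + N := by ring
  have e2 : 2 * (φ - 1) * N = (φ - 1) * N + (φ - 1) * N := by ring
  have e3 : φ * N = (φ - 1) * N + N := by
    have h1 : (φ - 1) * N = φ * N - N := by rw [Nat.sub_mul, one_mul]
    have h2 : N ≤ φ * N := Nat.le_mul_of_pos_left N (by omega)
    omega
  have hb : N + 1 + (c : ℕ) / 2 ≤ φ * N := by omega
  have hsplit : (∑ j : Fin M, ((2 / (M : ℝ)) *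
        (if (i : ℕ) = 0 then (1 : ℝ) / 2 else trigBasis i (2 * Real.pi * (j : ℕ) / M)))
        * trigBasisHigh N c (2 * Real.pi * (j : ℕ) / M))
      = (2 / (M : ℝ)) * ∑ j : Fin M,
        (if (i : ℕ) = 0 then (1 : ℝ) / 2 else trigBasis i (2 * Real.pi * (j : ℕ) / M))
        * trigBasisHigh N c (2 * Real.pi * (j : ℕ) / M) := by
    rw [Finset.mul_sum]
    exact Finset.sum_congr rfl fun j _ => mul_assoc _ _ _
  rw [hsplit]
  by_cases hc : (c : ℕ) % 2 = 0
  · simp only [trigBasisHigh, if_pos hc]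
    by_cases hi : (i : ℕ) = 0
    · simp only [if_pos hi]
      rw [← Finset.mul_sum, sum_cos_nat M (N + 1 + (c : ℕ) / 2) (by omega),
        if_neg (by omega)]
      ring
    · simp only [if_neg hi]
      by_cases hp : (i : ℕ) % 2 = 1
      · simp only [trigBasis, if_neg hi, if_pos hp]
        rw [S_cc M (((i : ℕ) + 1) / 2) (N + 1 + (c : ℕ) / 2) (by omega),
          if_neg (by omega)]
        ring
      · simp only [trigBasis, if_neg hi, if_neg hp]
        rw [S_sc M ((i : ℕ) / 2) (N + 1 + (c : ℕ) / 2) (by omega)]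
        ring
  · simp only [trigBasisHigh, if_neg hc]
    by_cases hi : (i : ℕ) = 0
    · simp only [if_pos hi]
      rw [← Finset.mul_sum, sum_sin_nat M (N + 1 + (c : ℕ) / 2) (by omega)]
      ring
    · simp only [if_neg hi]
      by_cases hp : (i : ℕ) % 2 = 1
      · simp only [trigBasis, if_neg hi, if_pos hp]
        rw [S_cs M (((i : ℕ) + 1) / 2) (N + 1 + (c : ℕ) / 2) (by omega)]
        ring
      · simp only [trigBasis, if_neg hi, if_neg hp]
        rw [S_ss M ((i : ℕ) / 2) (N + 1 + (c : ℕ) / 2) (by omega),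
          if_neg (by omega)]
        ring

theorem conditional_identity (N φ M : ℕ) (hN : 1 ≤ N) (hφ : 2 ≤ φ)
    (hM : (φ + 1) * N < M)
    (f : ℝ → ℝ) (h : Fin (2 * N + 1) → ℝ) (h' : Fin (2 * (φ - 1) * N) → ℝ)
    (hf : ∀ t : ℝ, f t =
      (∑ i : Fin (2 * N + 1), h i * trigBasis i t) +
      (∑ c : Fin (2 * (φ - 1) * N), h' c * trigBasisHigh N c t)) :
    let t : Fin M → ℝ := fun j => 2 * Real.pi * (j : ℕ) / M
    let E : Matrix (Fin M) (Fin (2 * N + 1)) ℝ := fun j i => trigBasis i (t j)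
    let E₁ : Matrix (Fin M) (Fin (2 * (φ - 1) * N)) ℝ := fun j c => trigBasisHigh N c (t j)
    let Ep : Matrix (Fin (2 * N + 1)) (Fin M) ℝ := fun i j =>
      (2 / M) * (if (i : ℕ) = 0 then (1 : ℝ) / 2 else trigBasis i (t j))
    let ftilde : Fin M → ℝ := fun j => f (t j)
    ftilde = E.mulVec h + E₁.mulVec h' ∧ Ep.mulVec ftilde = h := by
  intro t E E₁ Ep ftilde
  constructor
  · funext j
    show f (t j) = _
    rw [hf (t j)]
    simp only [Pi.add_apply, Matrix.mulVec, dotProduct, E, E₁]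
    congr 1 <;> exact Finset.sum_congr rfl fun _ _ => mul_comm _ _
  · funext i
    show ∑ j, Ep i j * ftilde j = h i
    have step : ∀ j : Fin M, Ep i j * ftilde j
        = (∑ i' : Fin (2 * N + 1), h i' * (Ep i j * trigBasis i' (t j)))
          + (∑ c : Fin (2 * (φ - 1) * N), h' c * (Ep i j * trigBasisHigh N c (t j))) := by
      intro j
      show Ep i j * f (t j) = _
      rw [hf (t j), mul_add, Finset.mul_sum, Finset.mul_sum]
      congr 1 <;> exact Finset.sum_congr rfl fun _ _ => by ring
    have swap2 : (∑ j : Fin M, ∑ c : Fin (2 * (φ - 1) * N),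
        h' c * (Ep i j * trigBasisHigh N c (t j)))
        = ∑ c : Fin (2 * (φ - 1) * N), ∑ j : Fin M,
          h' c * (Ep i j * trigBasisHigh N c (t j)) := Finset.sum_comm
    rw [Finset.sum_congr rfl fun j _ => step j, Finset.sum_add_distrib,
      Finset.sum_comm, swap2]
    have hA : ∀ i' : Fin (2 * N + 1),
        ∑ j : Fin M, h i' * (Ep i j * trigBasis i' (t j))
          = h i' * (if i = i' then 1 else 0) := by
      intro i'
      rw [← Finset.mul_sum]
      congr 1
      exact claimA N M (by nlinarith) i i'
    have hB : ∀ c : Fin (2 * (φ - 1) * N),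
        ∑ j : Fin M, h' c * (Ep i j * trigBasisHigh N c (t j)) = 0 := by
      intro c
      rw [← Finset.mul_sum]
      rw [claimB N φ M hN hφ hM i c]
      ring
    rw [Finset.sum_congr rfl fun i' _ => hA i', Finset.sum_congr rfl fun c _ => hB c]
    simp [Finset.sum_ite_eq, mul_ite]
end
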